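/- arXiv:2201.06145 — 2 statements merged into one kernel-verified Lean document; each statement's English description precedes it below -/
import Mathlib

section
/- If A and B are bounded, closed, nonempty, convex subsets of ℝ², then the Hausdorff distance between A and B equals the Hausdorff distance between their topological boundaries: d_H(A,B) = d_H(∂A, ∂B). -/
open Bornology Metric Set

section Aux

variable {E : Type*} [NormedAddCommGroup E] [InnerProductSpace ℝ E]

/-- Any point of a closed bounded set lies on a segment with endpoints in the frontier. -/
lemma exists_frontier_segment [Nontrivial E] [CompleteSpace E] [ProperSpace E]
    {A : Set E} (hAb : IsBounded A) (hAc : IsClosed A) {a : E} (ha : a ∈ A) :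
    ∃ x ∈ frontier A, ∃ y ∈ frontier A, a ∈ segment ℝ x y := by
  obtain ⟨v, hv⟩ := exists_ne (0 : E)
  set S : Set ℝ := {t : ℝ | a + t • v ∈ A} with hS
  have h0 : (0 : ℝ) ∈ S := by simpa [hS] using ha
  have hSc : IsClosed S := by
    have : Continuous fun t : ℝ => a + t • v := by continuity
    exact hAc.preimage this
  obtain ⟨R, hR⟩ := (isBounded_iff_subset_closedBall a).mp hAb
  have hSb : IsBounded S := by
    have : S ⊆ Icc (-(R / ‖v‖)) (R / ‖v‖) := by
      intro t ht
      have htA : a + t • v ∈ closedBall a R := hR ht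
      have : |t| * ‖v‖ ≤ R := by
        have := mem_closedBall.mp htA
        rwa [dist_eq_norm, add_sub_cancel_left, norm_smul, Real.norm_eq_abs] at this
      have hv0 : (0:ℝ) < ‖v‖ := norm_pos_iff.mpr hv
      have : |t| ≤ R / ‖v‖ := (le_div_iff₀ hv0).mpr this
      exact abs_le.mp this
    exact (isBounded_Icc _ _).subset this
  have hScomp : IsCompact S := isCompact_of_isClosed_isBounded hSc hSb
  have hSne : S.Nonempty := ⟨0, h0⟩
  set tp := sSup S with htp
  set tm := sInf S with htm
  have htpS : tp ∈ S := hScomp.sSup_mem hSne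
  have htmS : tm ∈ S := hScomp.sInf_mem hSne
  have htm0 : tm ≤ 0 := csInf_le hScomp.bddBelow h0
  have htp0 : (0:ℝ) ≤ tp := le_csSup hScomp.bddAbove h0
  have hv0 : (0:ℝ) < ‖v‖ := norm_pos_iff.mpr hv
  -- frontier membership of the endpoints
  have hfr : ∀ t : ℝ, t ∈ S → (∀ s : ℝ, s ∈ S → dist s t ≤ 0 ∨ (∃ s' ∉ S, dist s' t < 1)) →
      True := fun _ _ _ => trivial
  have key : ∀ t : ℝ, t ∈ S → (∀ ε > (0:ℝ), ∃ s ∉ S, |s - t| < ε) →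
      a + t • v ∈ frontier A := by
    intro t ht hε
    rw [frontier_eq_closure_inter_closure]
    refine ⟨subset_closure ht, ?_⟩
    rw [Metric.mem_closure_iff]
    intro ε hε'
    obtain ⟨s, hsS, hst⟩ := hε (ε / ‖v‖) (div_pos hε' hv0)
    refine ⟨a + s • v, hsS, ?_⟩
    have : dist (a + t • v) (a + s • v) = |t - s| * ‖v‖ := by
      rw [dist_eq_norm]
      simp only [add_sub_add_left_eq_sub, ← sub_smul, norm_smul, Real.norm_eq_abs]
    rw [this]
    have : |t - s| < ε / ‖v‖ := by rwa [abs_sub_comm]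
    calc |t - s| * ‖v‖ < ε / ‖v‖ * ‖v‖ := by
          exact mul_lt_mul_of_pos_right this hv0
      _ = ε := div_mul_cancel₀ _ (ne_of_gt hv0)
  have hxp : a + tp • v ∈ frontier A := by
    refine key tp htpS ?_
    intro ε hε'
    refine ⟨tp + ε / 2, ?_, by
      rw [add_sub_cancel_left, abs_of_pos (by linarith)]; linarith⟩
    intro hmem
    have : tp + ε / 2 ≤ tp := le_csSup hScomp.bddAbove hmem
    linarith
  have hxm : a + tm • v ∈ frontier A := by
    refine key tm htmS ?_
    intro ε hε'
    refine ⟨tm - ε / 2, ?_, by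
      rw [sub_sub_cancel_left, abs_neg, abs_of_pos (by linarith)]; linarith⟩
    intro hmem
    have : tm ≤ tm - ε / 2 := csInf_le hScomp.bddBelow hmem
    linarith
  refine ⟨a + tm • v, hxm, a + tp • v, hxp, ?_⟩
  -- a = image of 0 under the affine line map
  have hseg : (0:ℝ) ∈ segment ℝ tm tp := by
    rw [segment_eq_Icc (htm0.trans htp0)]
    exact ⟨htm0, htp0⟩
  have himg := image_segment ℝ (AffineMap.lineMap a (a + v)) tm tp
  have hmem : AffineMap.lineMap a (a + v) (0:ℝ) ∈
      (AffineMap.lineMap a (a + v)) '' segment ℝ tm tp := ⟨0, hseg, rfl⟩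
  rw [himg] at hmem
  have e : ∀ t : ℝ, AffineMap.lineMap a (a + v) t = a + t • v := by
    intro t
    rw [AffineMap.lineMap_apply]
    simp only [vsub_eq_sub, vadd_eq_add, add_sub_cancel_left]
    exact add_comm _ _
  rwa [e, e, e, zero_smul, add_zero] at hmem

/-- Convexity inequality for `infDist` along a segment. -/
lemma infDist_le_max_of_mem_segment {B : Set E} (hBconv : Convex ℝ B) (hBne : B.Nonempty)
    {x y a : E} (ha : a ∈ segment ℝ x y) :
    infDist a B ≤ max (infDist x B) (infDist y B) := by
  obtain ⟨θ, η, hθ, hη, hsum, rfl⟩ := ha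
  refine le_of_forall_pos_le_add fun ε hε => ?_
  obtain ⟨bx, hbx, hbxd⟩ := (infDist_lt_iff hBne).mp
    (lt_add_of_le_of_pos (le_refl (infDist x B)) hε)
  obtain ⟨by', hby, hbyd⟩ := (infDist_lt_iff hBne).mp
    (lt_add_of_le_of_pos (le_refl (infDist y B)) hε)
  have hb : θ • bx + η • by' ∈ B := hBconv hbx hby hθ hη hsum
  calc infDist (θ • x + η • y) B ≤ dist (θ • x + η • y) (θ • bx + η • by') :=
        infDist_le_dist_of_mem hb
    _ ≤ dist (θ • x) (θ • bx) + dist (η • y) (η • by') := dist_add_add_le _ _ _ _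
    _ = θ * dist x bx + η * dist y by' := by
        rw [dist_smul₀, dist_smul₀, Real.norm_eq_abs, Real.norm_eq_abs,
          abs_of_nonneg hθ, abs_of_nonneg hη]
    _ ≤ θ * (max (infDist x B) (infDist y B) + ε) + η * (max (infDist x B) (infDist y B) + ε) := by
        gcongr
        · exact hbxd.le.trans (by gcongr; exact le_max_left _ _)
        · exact hbyd.le.trans (by gcongr; exact le_max_right _ _)
    _ = max (infDist x B) (infDist y B) + ε := by rw [← add_mul, hsum, one_mul]

end Aux

section Aux2

variable {E : Type*} [NormedAddCommGroup E] [InnerProductSpace ℝ E] [FiniteDimensional ℝ E]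
  [Nontrivial E]

local notation "⟪" x ", " y "⟫" => @inner ℝ _ _ x y

/-- Key lemma: a frontier point of `A` is within `hausdorffDist A B` of the frontier of `B`. -/
lemma infDist_frontier_le {A B : Set E}
    (hAb : IsBounded A) (hBb : IsBounded B)
    (hAc : IsClosed A) (hA : A.Nonempty) (hB : B.Nonempty)
    (hAconv : Convex ℝ A)
    (fin : EMetric.hausdorffEdist A B ≠ ⊤)
    {a : E} (ha : a ∈ frontier A) :
    infDist a (frontier B) ≤ hausdorffDist A B := by
  have haA : a ∈ A := hAc.frontier_subset ha
  by_cases haB : a ∈ B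
  · -- main case: a ∈ B
    have hBne_univ : B ≠ univ := by
      intro h
      exact NormedSpace.unbounded_univ ℝ E (h ▸ hBb)
    obtain ⟨w, hw, hwd⟩ := exists_mem_frontier_infDist_compl_eq_dist haB hBne_univ
    have h1 : infDist a (frontier B) ≤ infDist a Bᶜ := hwd ▸ infDist_le_dist_of_mem hw
    refine h1.trans ?_
    -- show infDist a Bᶜ ≤ hausdorffDist A B
    refine le_of_forall_pos_le_add fun ε hε => ?_
    by_cases hρ : infDist a Bᶜ ≤ ε
    · exact hρ.trans (le_add_of_nonneg_left hausdorffDist_nonneg)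
    push_neg at hρ
    set ρ := infDist a Bᶜ with hρdef
    set t := ρ - ε with ht
    have ht0 : 0 < t := by simp [ht]; linarith
    -- pick z outside A close to a
    have haA' : a ∈ closure Aᶜ := by
      rw [frontier_eq_closure_inter_closure] at ha; exact ha.2
    obtain ⟨z, hz, hzd⟩ := Metric.mem_closure_iff.mp haA' (ε / 2) (by linarith)
    -- projection of z onto A
    obtain ⟨p, hp, hpnorm⟩ := exists_norm_eq_iInf_of_complete_convex hA
      (hAc.isComplete) hAconv z
    have hproj : ∀ x ∈ A, ⟪z - p, x - p⟫ ≤ 0 :=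
      (norm_eq_iInf_iff_real_inner_le_zero hAconv hp).mp hpnorm
    have hzp : z ≠ p := fun h => hz (h ▸ hp)
    have hc : (0:ℝ) < ‖z - p‖ := by
      rw [norm_pos_iff, sub_ne_zero]; exact hzp
    set u := ‖z - p‖⁻¹ • (z - p) with hu
    have hunorm : ‖u‖ = 1 := by
      rw [hu, norm_smul, norm_inv, norm_norm, inv_mul_cancel₀ hc.ne']
    set y := z + t • u with hy
    have hdzy : dist z y = t := by
      rw [hy, dist_eq_norm]
      simp [norm_smul, hunorm, abs_of_pos ht0]
    have hyB : y ∈ B := by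
      by_contra hyB
      have h1' : ρ ≤ dist a y := infDist_le_dist_of_mem (show y ∈ Bᶜ from hyB)
      have h2' : dist a y ≤ dist a z + dist z y := dist_triangle _ _ _
      rw [hdzy, ht] at h2'
      linarith
    -- for every x ∈ A, t ≤ dist y x
    have hkey : ∀ x ∈ A, t ≤ dist y x := by
      intro x hx
      have h1 : ⟪y - x, u⟫ ≤ ‖y - x‖ := by
        have := real_inner_le_norm (y - x) u
        rwa [hunorm, mul_one] at this
      have h2 : t ≤ ⟪y - x, u⟫ := by
        have hyx : y - x = (z - p) + t • u + (p - x) := by rw [hy]; abel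
        rw [hyx, inner_add_left, inner_add_left, real_inner_smul_left]
        have e1 : ⟪z - p, u⟫ = ‖z - p‖ := by
          rw [hu, real_inner_smul_right, real_inner_self_eq_norm_sq]
          field_simp
        have e2 : ⟪u, u⟫ = 1 := by
          rw [real_inner_self_eq_norm_sq, hunorm]; norm_num
        have e3 : (0:ℝ) ≤ ⟪p - x, u⟫ := by
          rw [hu, real_inner_smul_right]
          have : ⟪p - x, z - p⟫ = -⟪z - p, x - p⟫ := by
            rw [real_inner_comm]
            rw [show p - x = -(x - p) by abel, inner_neg_right]
          rw [this]
          have h4 := hproj x hx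
          exact mul_nonneg (by positivity) (by linarith)
        rw [e1, e2]
        nlinarith [hc]
      rw [dist_eq_norm]
      linarith
    have hfin' : EMetric.hausdorffEdist B A ≠ ⊤ := by
      rwa [show EMetric.hausdorffEdist B A = EMetric.hausdorffEdist A B from Metric.hausdorffEDist_comm]
    have : t ≤ infDist y A := by
      by_contra h
      push_neg at h
      obtain ⟨x, hx, hxd⟩ := (infDist_lt_iff hA).mp h
      exact absurd hxd (not_lt.mpr (hkey x hx))
    have h2 : infDist y A ≤ hausdorffDist B A := infDist_le_hausdorffDist_of_mem hyB hfin'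
    rw [hausdorffDist_comm] at h2
    have : t ≤ hausdorffDist A B := this.trans h2
    rw [ht] at this
    linarith
  · -- a ∉ B : use the compl trick
    have hBcne : Bᶜ ≠ univ := by
      intro h
      obtain ⟨b, hb⟩ := hB
      have : b ∈ Bᶜ := h ▸ mem_univ b
      exact this hb
    obtain ⟨w, hw, hwd⟩ := exists_mem_frontier_infDist_compl_eq_dist (s := Bᶜ) haB hBcne
    rw [frontier_compl] at hw
    rw [compl_compl] at hwd
    calc infDist a (frontier B) ≤ dist a w := infDist_le_dist_of_mem hw
      _ = infDist a B := hwd.symm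
      _ ≤ hausdorffDist A B := infDist_le_hausdorffDist_of_mem haA fin

end Aux2

open Bornology

/-- Property (H3): if `A` and `B` are bounded, closed, nonempty, convex subsets of ℝ²,
then the Hausdorff distance between `A` and `B` equals the Hausdorff distance
between their topological boundaries. -/
theorem stmt_2 (A B : Set (EuclideanSpace ℝ (Fin 2)))
    (hAb : IsBounded A) (hBb : IsBounded B)
    (hAc : IsClosed A) (hBc : IsClosed B)
    (hA : A.Nonempty) (hB : B.Nonempty)
    (hAconv : Convex ℝ A) (hBconv : Convex ℝ B) :
    Metric.hausdorffDist A B = Metric.hausdorffDist (frontier A) (frontier B) := by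
  -- frontiers are nonempty and bounded
  obtain ⟨a₀, ha₀⟩ := id hA
  obtain ⟨b₀, hb₀⟩ := id hB
  obtain ⟨xA, hxA, -, -, -⟩ := exists_frontier_segment hAb hAc ha₀
  obtain ⟨xB, hxB, -, -, -⟩ := exists_frontier_segment hBb hBc hb₀
  have hfAne : (frontier A).Nonempty := ⟨xA, hxA⟩
  have hfBne : (frontier B).Nonempty := ⟨xB, hxB⟩
  have hfAb : IsBounded (frontier A) := hAb.subset hAc.frontier_subset
  have hfBb : IsBounded (frontier B) := hBb.subset hBc.frontier_subset
  have finAB : EMetric.hausdorffEdist A B ≠ ⊤ :=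
    Metric.hausdorffEdist_ne_top_of_nonempty_of_bounded hA hB hAb hBb
  have finBA : EMetric.hausdorffEdist B A ≠ ⊤ := by
    rwa [show EMetric.hausdorffEdist B A = EMetric.hausdorffEdist A B from Metric.hausdorffEDist_comm]
  have finF : EMetric.hausdorffEdist (frontier A) (frontier B) ≠ ⊤ :=
    Metric.hausdorffEdist_ne_top_of_nonempty_of_bounded hfAne hfBne hfAb hfBb
  have finF' : EMetric.hausdorffEdist (frontier B) (frontier A) ≠ ⊤ := by
    rwa [show EMetric.hausdorffEdist (frontier B) (frontier A) = EMetric.hausdorffEdist (frontier A) (frontier B) from Metric.hausdorffEDist_comm]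
  apply le_antisymm
  · -- hausdorffDist A B ≤ hausdorffDist (frontier A) (frontier B)
    apply Metric.hausdorffDist_le_of_infDist Metric.hausdorffDist_nonneg
    · intro x hx
      obtain ⟨p, hp, q, hq, hseg⟩ := exists_frontier_segment hAb hAc hx
      refine (infDist_le_max_of_mem_segment hBconv hB hseg).trans (max_le ?_ ?_)
      · calc Metric.infDist p B ≤ Metric.infDist p (frontier B) :=
              Metric.infDist_le_infDist_of_subset hBc.frontier_subset hfBne
          _ ≤ _ := Metric.infDist_le_hausdorffDist_of_mem hp finF
      · calc Metric.infDist q B ≤ Metric.infDist q (frontier B) :=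
              Metric.infDist_le_infDist_of_subset hBc.frontier_subset hfBne
          _ ≤ _ := Metric.infDist_le_hausdorffDist_of_mem hq finF
    · intro x hx
      obtain ⟨p, hp, q, hq, hseg⟩ := exists_frontier_segment hBb hBc hx
      refine (infDist_le_max_of_mem_segment hAconv hA hseg).trans (max_le ?_ ?_)
      · calc Metric.infDist p A ≤ Metric.infDist p (frontier A) :=
              Metric.infDist_le_infDist_of_subset hAc.frontier_subset hfAne
          _ ≤ Metric.hausdorffDist (frontier B) (frontier A) :=
              Metric.infDist_le_hausdorffDist_of_mem hp finF'
          _ = _ := Metric.hausdorffDist_comm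
      · calc Metric.infDist q A ≤ Metric.infDist q (frontier A) :=
              Metric.infDist_le_infDist_of_subset hAc.frontier_subset hfAne
          _ ≤ Metric.hausdorffDist (frontier B) (frontier A) :=
              Metric.infDist_le_hausdorffDist_of_mem hq finF'
          _ = _ := Metric.hausdorffDist_comm
  · -- hausdorffDist (frontier A) (frontier B) ≤ hausdorffDist A B
    apply Metric.hausdorffDist_le_of_infDist Metric.hausdorffDist_nonneg
    · intro x hx
      exact infDist_frontier_le hAb hBb hAc hA hB hAconv finAB hx
    · intro x hx
      have := infDist_frontier_le hBb hAb hBc hB hA hBconv finBA hx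
      rwa [Metric.hausdorffDist_comm] at this
end

section
/- Let Ω ⊆ ℝ² be a bounded open convex set, and let F ⊆ closure(Ω) be a closed set. Suppose σ_k : [0,1] → closure(Ω) are Lipschitz curves of the form σ_k(t) = q + ℓ_k ∫₀ᵗ (cos θ_k(s), sin θ_k(s)) ds with each θ_k nondecreasing, θ_k(1) − θ_k(0) ≤ 2π, σ_k(1) = p for fixed distinct points p, q ∈ ∂Ω. Then there exist a subsequence and a Lipschitz curve σ : [0,1] → closure(Ω) of the same form (σ(t) = q + ℓ ∫₀ᵗ (cos θ(s), sin θ(s)) ds with θ nondecreasing, θ(1) − θ(0) ≤ 2π, σ(1) = p) such that σ_k → σ in W^{1,1}([0,1]; ℝ²) and uniformly on [0,1]. -/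
open Set Filter MeasureTheory Bornology
open scoped NNReal Topology

noncomputable abbrev dirVec (θ : ℝ → ℝ) (s : ℝ) : EuclideanSpace ℝ (Fin 2) :=
  (EuclideanSpace.equiv (Fin 2) ℝ).symm ![Real.cos (θ s), Real.sin (θ s)]

lemma dirVec_zero' (θ : ℝ → ℝ) (s : ℝ) : dirVec θ s 0 = Real.cos (θ s) := rfl
lemma dirVec_one' (θ : ℝ → ℝ) (s : ℝ) : dirVec θ s 1 = Real.sin (θ s) := rfl

lemma norm_dirVec (θ : ℝ → ℝ) (s : ℝ) : ‖dirVec θ s‖ = 1 := by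
  rw [EuclideanSpace.norm_eq]
  simp [Fin.sum_univ_two, dirVec_zero', dirVec_one', Real.cos_sq_add_sin_sq]

lemma cont_dir : Continuous (fun a : ℝ => (EuclideanSpace.equiv (Fin 2) ℝ).symm ![Real.cos a, Real.sin a]) := by
  apply (EuclideanSpace.equiv (Fin 2) ℝ).symm.continuous.comp
  apply continuous_pi
  intro i
  fin_cases i <;> simp [Real.continuous_cos, Real.continuous_sin]

lemma meas_dirVec (θ : ℝ → ℝ) (hθ : Measurable θ) : Measurable (dirVec θ) :=
  cont_dir.measurable.comp hθ

lemma inner_dirVec (β : ℝ) (θ : ℝ → ℝ) (s : ℝ) :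
    inner (𝕜 := ℝ) (dirVec (fun _ => β) 0) (dirVec θ s) = Real.cos (θ s - β) := by
  simp [PiLp.inner_apply, Fin.sum_univ_two, dirVec_zero', dirVec_one', Real.cos_sub]

lemma intInt_dirVec (θ : ℝ → ℝ) (hθ : Measurable θ) (a b : ℝ) :
    IntervalIntegrable (dirVec θ) MeasureTheory.volume a b := by
  rw [intervalIntegrable_iff]
  haveI : IsFiniteMeasure (MeasureTheory.volume.restrict (Set.uIoc a b)) :=
    ⟨by rw [Measure.restrict_apply_univ]; exact measure_Ioc_lt_top⟩
  apply Integrable.mono' (integrable_const (1:ℝ))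
  · exact (meas_dirVec θ hθ).aestronglyMeasurable
  · exact Eventually.of_forall (fun s => le_of_eq (norm_dirVec θ s))

lemma cos_ge_half {x : ℝ} (hx : |x| ≤ Real.pi / 6) : (1:ℝ)/2 ≤ Real.cos x := by
  rw [← Real.cos_abs]
  have h1 : Real.cos (Real.pi/6) ≤ Real.cos |x| :=
    Real.cos_le_cos_of_nonneg_of_le_pi (abs_nonneg x)
      (by linarith [Real.pi_pos]) hx
  have h2 : (1:ℝ)/2 ≤ Real.cos (Real.pi/6) := by
    rw [Real.cos_pi_div_six]
    have : (1:ℝ) ≤ Real.sqrt 3 := by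
      rw [show (1:ℝ) = Real.sqrt 1 by simp]
      exact Real.sqrt_le_sqrt (by norm_num)
    linarith
  linarith

lemma piece_lb (ψ : ℝ → ℝ) (hmeas : Measurable ψ) (a b β : ℝ) (hab : a ≤ b)
    (h : ∀ s ∈ Set.Ioo a b, |ψ s - β| ≤ Real.pi / 6) :
    (b - a) / 2 ≤ ‖∫ s in a..b, dirVec ψ s‖ := by
  have hint : IntegrableOn (dirVec ψ) (Set.Ioc a b) MeasureTheory.volume := by
    have := intInt_dirVec ψ hmeas a b
    rw [intervalIntegrable_iff, Set.uIoc_of_le hab] at this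
    exact this
  haveI : IsFiniteMeasure (MeasureTheory.volume.restrict (Set.Ioc a b)) :=
    ⟨by rw [Measure.restrict_apply_univ]; exact measure_Ioc_lt_top⟩
  set u : EuclideanSpace ℝ (Fin 2) := dirVec (fun _ => β) 0 with hu
  have hcosint : Integrable (fun s => Real.cos (ψ s - β))
      (MeasureTheory.volume.restrict (Set.Ioc a b)) := by
    apply Integrable.mono' (integrable_const (1:ℝ))
    · exact ((Real.continuous_cos.measurable).comp ((hmeas.sub measurable_const))).aestronglyMeasurable
    · exact Eventually.of_forall (fun s => by rw [Real.norm_eq_abs]; exact Real.abs_cos_le_one _)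
  have step1 : (b - a)/2 ≤ ∫ s in Set.Ioc a b, Real.cos (ψ s - β) := by
    have hae : ∀ᵐ s ∂(MeasureTheory.volume.restrict (Set.Ioc a b)),
        (fun _ => (1:ℝ)/2) s ≤ Real.cos (ψ s - β) := by
      rw [ae_restrict_iff' measurableSet_Ioc]
      have hb : ∀ᵐ s : ℝ ∂MeasureTheory.volume, s ≠ b := by
        rw [ae_iff]
        have : {s : ℝ | ¬ s ≠ b} = {b} := by ext s; simp
        rw [this]; exact measure_singleton b
      filter_upwards [hb] with s hs hmem
      exact cos_ge_half (h s ⟨hmem.1, lt_of_le_of_ne hmem.2 hs⟩)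
    have := integral_mono_ae (integrable_const ((1:ℝ)/2)) hcosint hae
    rw [setIntegral_const, measureReal_def, Real.volume_Ioc, ENNReal.toReal_ofReal (by linarith), smul_eq_mul] at this
    linarith
  have step2 : (∫ s in Set.Ioc a b, Real.cos (ψ s - β))
      = inner (𝕜 := ℝ) u (∫ s in Set.Ioc a b, dirVec ψ s) := by
    rw [← integral_inner hint u]
    exact integral_congr_ae (Eventually.of_forall (fun s => (inner_dirVec β ψ s).symm))
  have step3 : inner (𝕜 := ℝ) u (∫ s in Set.Ioc a b, dirVec ψ s)
      ≤ ‖∫ s in Set.Ioc a b, dirVec ψ s‖ := by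
    have := real_inner_le_norm u (∫ s in Set.Ioc a b, dirVec ψ s)
    rwa [norm_dirVec, one_mul] at this
  rw [intervalIntegral.integral_of_le hab]
  linarith

lemma length_bound (ψ : ℝ → ℝ) (hψ : Monotone ψ) (hmeas : Measurable ψ)
    (hv : ψ 1 - ψ 0 ≤ 2 * Real.pi) (ℓ R : ℝ) (hl : 0 ≤ ℓ)
    (hdisp : ∀ a ∈ Set.Icc (0:ℝ) 1, ∀ b ∈ Set.Icc (0:ℝ) 1,
        ‖ℓ • ∫ s in a..b, dirVec ψ s‖ ≤ 2 * R) :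
    ℓ ≤ 28 * R := by
  have hπ := Real.pi_pos
  set α := ψ 0 with hα
  set c := Real.pi / 3 with hc
  set S : ℕ → Set ℝ := fun i => {t ∈ Set.Icc (0:ℝ) 1 | ψ t ≤ α + i * c} with hS
  have hS0 : ∀ i, (0:ℝ) ∈ S i := by
    intro i
    refine ⟨⟨le_refl 0, zero_le_one⟩, ?_⟩
    have : 0 ≤ (i:ℝ) * c := by positivity
    linarith
  have hSne : ∀ i, (S i).Nonempty := fun i => ⟨0, hS0 i⟩
  have hSbdd : ∀ i, BddAbove (S i) := fun i => ⟨1, fun t ht => ht.1.2⟩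
  set T : ℕ → ℝ := fun i => Nat.casesOn i 0 (fun j => sSup (S j)) with hT
  have hTmem : ∀ i, T i ∈ Set.Icc (0:ℝ) 1 := by
    intro i
    cases i with
    | zero => exact ⟨le_refl 0, zero_le_one⟩
    | succ j =>
      constructor
      · exact le_csSup (hSbdd j) (hS0 j)
      · exact csSup_le (hSne j) (fun t ht => ht.1.2)
  have hTmono : ∀ i, T i ≤ T (i + 1) := by
    intro i
    cases i with
    | zero => exact (hTmem 1).1
    | succ j =>
      apply csSup_le_csSup (hSbdd (j+1)) (hSne j)
      intro t ht
      refine ⟨ht.1, le_trans ht.2 ?_⟩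
      have : (j:ℝ) * c ≤ ((j:ℕ)+1:ℝ) * c := by nlinarith
      push_cast
      linarith
  have hT7 : T 7 = 1 := by
    apply le_antisymm (hTmem 7).2
    apply le_csSup (hSbdd 6)
    refine ⟨⟨zero_le_one, le_refl 1⟩, ?_⟩
    have : ψ 1 ≤ α + 2 * Real.pi := by linarith
    have h6 : ((6:ℕ):ℝ) * c = 2 * Real.pi := by
      push_cast; rw [hc]; ring
    linarith [h6 ▸ this]
  have hang : ∀ i < 7, ∀ s ∈ Set.Ioo (T i) (T (i + 1)),
      |ψ s - (α + i * c - Real.pi / 6)| ≤ Real.pi / 6 := by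
    intro i _ s hs
    have hupper : ψ s ≤ α + i * c := by
      obtain ⟨t'', ht'', hst⟩ := exists_lt_of_lt_csSup (hSne i) hs.2
      exact le_trans (hψ hst.le) ht''.2
    have hlower : α + i * c - c ≤ ψ s := by
      cases i with
      | zero =>
        have : α ≤ ψ s := hψ (le_trans (hTmem 0).1 hs.1.le)
        simp only [Nat.cast_zero, zero_mul, add_zero]
        linarith
      | succ j =>
        have hnotin : s ∉ S j := fun hmem => not_lt.2 (le_csSup (hSbdd j) hmem) hs.1
        have hsIcc : s ∈ Set.Icc (0:ℝ) 1 :=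
          ⟨le_trans (hTmem (j+1)).1 hs.1.le, le_trans hs.2.le (hTmem (j+2)).2⟩
        have : ¬ (ψ s ≤ α + j * c) := fun hle => hnotin ⟨hsIcc, hle⟩
        push_cast
        push_cast at this
        linarith [not_le.1 this]
    rw [abs_le]
    have hcv : c = Real.pi / 3 := hc
    constructor <;> linarith
  have hpiece : ∀ i < 7, ℓ * (T (i + 1) - T i) / 2 ≤ 2 * R := by
    intro i hi
    have h1 : (T (i+1) - T i) / 2 ≤ ‖∫ s in (T i)..(T (i+1)), dirVec ψ s‖ :=
      piece_lb ψ hmeas _ _ _ (hTmono i) (hang i hi)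
    have h2 : ‖ℓ • ∫ s in (T i)..(T (i+1)), dirVec ψ s‖ ≤ 2 * R :=
      hdisp _ (hTmem i) _ (hTmem (i+1))
    rw [norm_smul, Real.norm_eq_abs, abs_of_nonneg hl] at h2
    nlinarith [norm_nonneg (∫ s in (T i)..(T (i+1)), dirVec ψ s)]
  have hsum : ∑ i ∈ Finset.range 7, (T (i + 1) - T i) = 1 := by
    rw [Finset.sum_range_sub T]
    have hT0 : T 0 = 0 := rfl
    rw [hT7, hT0, sub_zero]
  have : ∑ i ∈ Finset.range 7, ℓ * (T (i + 1) - T i) / 2 ≤ ∑ _i ∈ Finset.range 7, 2 * R :=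
    Finset.sum_le_sum (fun i hi => hpiece i (Finset.mem_range.1 hi))
  rw [← Finset.sum_div, ← Finset.mul_sum, hsum] at this
  simp only [Finset.sum_const, Finset.card_range, nsmul_eq_mul] at this
  linarith
lemma helly_selection (ψ : ℕ → ℝ → ℝ) (hmono : ∀ k, Monotone (ψ k)) (M : ℝ)
    (hbd : ∀ k t, ψ k t ∈ Set.Icc (0:ℝ) M)
    (x : ℕ → ℝ) (a b : ℝ) (hx : ∀ k, x k ∈ Set.Icc a b) :
    ∃ φ : ℕ → ℕ, StrictMono φ ∧ ∃ g : ℚ → ℝ, ∃ θ' : ℝ → ℝ,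
      (∀ r : ℚ, Tendsto (fun k => ψ (φ k) r) atTop (𝓝 (g r))) ∧
      Monotone θ' ∧ (∀ t, θ' t ∈ Set.Icc (0:ℝ) M) ∧
      (∀ (r : ℚ) (t : ℝ), t < (r:ℝ) → θ' t ≤ g r) ∧
      (∀ (r : ℚ) (t : ℝ), (r:ℝ) < t → g r ≤ θ' t) ∧
      (∀ᵐ t : ℝ ∂MeasureTheory.volume, Tendsto (fun k => ψ (φ k) t) atTop (𝓝 (θ' t))) ∧
      (∃ l ∈ Set.Icc a b, Tendsto (fun k => x (φ k)) atTop (𝓝 l)) := by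
  -- compactness extraction
  haveI : CompactSpace (Set.Icc (0:ℝ) M) := isCompact_iff_compactSpace.mp isCompact_Icc
  haveI : CompactSpace (Set.Icc a b) := isCompact_iff_compactSpace.mp isCompact_Icc
  set X := (ℚ → Set.Icc (0:ℝ) M) × Set.Icc a b with hX
  set F : ℕ → X := fun k => (fun r => ⟨ψ k r, hbd k r⟩, ⟨x k, hx k⟩) with hF
  obtain ⟨⟨G, L⟩, φ, hφ, hconv⟩ := CompactSpace.tendsto_subseq F
  rw [Prod.tendsto_iff] at hconv
  obtain ⟨hconv1, hconv2⟩ := hconv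
  have hg : ∀ r : ℚ, Tendsto (fun k => ψ (φ k) r) atTop (𝓝 ((G r : ℝ))) := by
    intro r
    have h1 : Tendsto (fun k => (F (φ k)).1 r) atTop (𝓝 (G r)) := by
      have := tendsto_pi_nhds.1 hconv1 r
      exact this
    exact (continuous_subtype_val.continuousAt.tendsto).comp h1
  have hl : Tendsto (fun k => x (φ k)) atTop (𝓝 (L : ℝ)) :=
    (continuous_subtype_val.continuousAt.tendsto).comp hconv2
  set g : ℚ → ℝ := fun r => (G r : ℝ) with hgdef
  have hgmem : ∀ r, g r ∈ Set.Icc (0:ℝ) M := fun r => (G r).2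
  have hgmono : ∀ r s : ℚ, r ≤ s → g r ≤ g s := by
    intro r s hrs
    exact le_of_tendsto_of_tendsto' (hg r) (hg s)
      (fun k => hmono (φ k) (by exact_mod_cast hrs))
  -- the monotone envelope
  haveI hNE : ∀ t : ℝ, Nonempty {r : ℚ // t < (r:ℝ)} := by
    intro t; obtain ⟨r, hr⟩ := exists_rat_gt t; exact ⟨⟨r, hr⟩⟩
  set θ' : ℝ → ℝ := fun t => ⨅ r : {r : ℚ // t < (r:ℝ)}, g r.1 with hθ'def
  have hbdd : ∀ t : ℝ, BddBelow (Set.range (fun r : {r : ℚ // t < (r:ℝ)} => g r.1)) := by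
    intro t
    refine ⟨0, ?_⟩
    rintro y ⟨r, rfl⟩
    exact (hgmem r.1).1
  have hle : ∀ (r : ℚ) (t : ℝ), t < (r:ℝ) → θ' t ≤ g r := by
    intro r t h
    exact ciInf_le (hbdd t) ⟨r, h⟩
  have hge : ∀ (r : ℚ) (t : ℝ), (r:ℝ) < t → g r ≤ θ' t := by
    intro r t h
    apply le_ciInf
    rintro ⟨r', hr'⟩
    apply hgmono
    exact_mod_cast (h.trans hr').le
  have hθmono : Monotone θ' := by
    intro s t hst
    apply le_ciInf
    rintro ⟨r, hr⟩
    exact ciInf_le (hbdd s) ⟨r, lt_of_le_of_lt hst hr⟩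
  have hθmem : ∀ t, θ' t ∈ Set.Icc (0:ℝ) M := by
    intro t
    obtain ⟨r, hr⟩ := exists_rat_gt t
    constructor
    · apply le_ciInf; rintro ⟨r', _⟩; exact (hgmem r').1
    · exact le_trans (hle r t hr) (hgmem r).2
  -- convergence at continuity points
  have key : ∀ t : ℝ, ContinuousAt θ' t → Tendsto (fun k => ψ (φ k) t) atTop (𝓝 (θ' t)) := by
    intro t hcont
    rw [Metric.continuousAt_iff] at hcont
    rw [tendsto_order]
    constructor
    · intro u hu
      obtain ⟨δ, hδpos, hδ⟩ := hcont ((θ' t - u)/2) (by linarith)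
      obtain ⟨r, hr1, hr2⟩ := exists_rat_btwn (show t - δ/2 < t by linarith)
      have h2 : |θ' (t - δ/2) - θ' t| < (θ' t - u)/2 := by
        apply hδ
        rw [Real.dist_eq]
        rw [abs_of_nonpos (by linarith)]
        linarith
      have h3 : u < g r := by
        have := hle r (t - δ/2) hr1
        have habs := abs_lt.1 h2
        linarith [habs.1]
      have hev : ∀ᶠ k in atTop, u < ψ (φ k) r := (hg r).eventually_const_lt h3
      filter_upwards [hev] with k hk
      exact lt_of_lt_of_le hk (hmono (φ k) hr2.le)
    · intro u hu
      obtain ⟨δ, hδpos, hδ⟩ := hcont ((u - θ' t)/2) (by linarith)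
      obtain ⟨r, hr1, hr2⟩ := exists_rat_btwn (show t < t + δ/2 by linarith)
      have h2 : |θ' (t + δ/2) - θ' t| < (u - θ' t)/2 := by
        apply hδ
        rw [Real.dist_eq]
        rw [abs_of_nonneg (by linarith)]
        linarith
      have h3 : g r < u := by
        have := hge r (t + δ/2) hr2
        have habs := abs_lt.1 h2
        linarith [habs.2]
      have hev : ∀ᶠ k in atTop, ψ (φ k) r < u := (hg r).eventually_lt_const h3
      filter_upwards [hev] with k hk
      exact lt_of_le_of_lt (hmono (φ k) hr1.le) hk
  -- a.e. convergence
  have hae : ∀ᵐ t : ℝ ∂MeasureTheory.volume,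
      Tendsto (fun k => ψ (φ k) t) atTop (𝓝 (θ' t)) := by
    have hcnt : Set.Countable {t : ℝ | ¬ContinuousAt θ' t} :=
      hθmono.countable_not_continuousAt
    have hnul : MeasureTheory.volume {t : ℝ | ¬ContinuousAt θ' t} = 0 :=
      hcnt.measure_zero _
    rw [MeasureTheory.ae_iff]
    apply measure_mono_null _ hnul
    intro t ht
    simp only [Set.mem_setOf_eq] at ht ⊢
    exact fun hc => ht (key t hc)
  exact ⟨φ, hφ, g, θ', hg, hθmono, hθmem, hle, hge, hae, ⟨L, L.2, hl⟩⟩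
/-- Compactness of constant-speed convex-type curves: a sequence of Lipschitz curves
`σₖ(t) = q + ℓₖ ∫₀ᵗ (cos θₖ(s), sin θₖ(s)) ds` in `closure Ω` with `θₖ` nondecreasing,
`θₖ(1) − θₖ(0) ≤ 2π` and `σₖ(1) = p` admits a subsequence converging, in `W^{1,1}([0,1];ℝ²)`
and uniformly on `[0,1]`, to a curve `σ` of the same form. -/
theorem stmt_8 (Ω : Set (EuclideanSpace ℝ (Fin 2)))
    (hΩo : IsOpen Ω) (hΩb : IsBounded Ω) (hΩc : Convex ℝ Ω)
    (p q : EuclideanSpace ℝ (Fin 2)) (hp : p ∈ frontier Ω) (hq : q ∈ frontier Ω) (hpq : p ≠ q)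
    (θ : ℕ → ℝ → ℝ) (ℓ : ℕ → ℝ) (σ : ℕ → ℝ → EuclideanSpace ℝ (Fin 2))
    (hσ : ∀ k t, σ k t = q + ℓ k • ∫ s in (0:ℝ)..t, dirVec (θ k) s)
    (hmono : ∀ k, MonotoneOn (θ k) (Set.Icc 0 1))
    (hθ : ∀ k, θ k 1 - θ k 0 ≤ 2 * Real.pi)
    (hℓpos : ∀ k, 0 < ℓ k)
    (hend : ∀ k, σ k 1 = p)
    (hrange : ∀ k, ∀ t ∈ Set.Icc (0:ℝ) 1, σ k t ∈ closure Ω) :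
    ∃ (φ : ℕ → ℕ), StrictMono φ ∧
      ∃ (ℓ' : ℝ) (θ' : ℝ → ℝ) (σ' : ℝ → EuclideanSpace ℝ (Fin 2)),
        (∀ t, σ' t = q + ℓ' • ∫ s in (0:ℝ)..t, dirVec θ' s) ∧
        MonotoneOn θ' (Set.Icc 0 1) ∧ θ' 1 - θ' 0 ≤ 2 * Real.pi ∧
        0 < ℓ' ∧ σ' 1 = p ∧ (∀ t ∈ Set.Icc (0:ℝ) 1, σ' t ∈ closure Ω) ∧
        Tendsto (fun k => ∫ t in (0:ℝ)..1, ‖σ (φ k) t - σ' t‖) atTop (𝓝 0) ∧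
        Tendsto (fun k => ∫ t in (0:ℝ)..1, ‖ℓ (φ k) • dirVec (θ (φ k)) t - ℓ' • dirVec θ' t‖)
          atTop (𝓝 0) ∧
        TendstoUniformlyOn (fun k => σ (φ k)) σ' atTop (Set.Icc 0 1) := by
  classical
  have hπ := Real.pi_pos
  -- bounding ball around closure Ω
  obtain ⟨R0, hR0⟩ := hΩb.subset_closedBall 0
  set R := max R0 0 with hRdef
  have hRnn : (0:ℝ) ≤ R := le_max_right _ _
  have hΩR : closure Ω ⊆ Metric.closedBall 0 R :=
    closure_minimal (hR0.trans (Metric.closedBall_subset_closedBall (le_max_left _ _)))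
      Metric.isClosed_closedBall
  have hnorm2R : ∀ x ∈ closure Ω, ∀ y ∈ closure Ω, ‖x - y‖ ≤ 2 * R := by
    intro x hx y hy
    have hx' := mem_closedBall_zero_iff.1 (hΩR hx)
    have hy' := mem_closedBall_zero_iff.1 (hΩR hy)
    calc ‖x - y‖ ≤ ‖x‖ + ‖y‖ := norm_sub_le _ _
      _ ≤ 2 * R := by linarith
  -- clamp to [0,1]
  set cl : ℝ → ℝ := fun t => min 1 (max 0 t) with hcl
  have hclmem : ∀ t, cl t ∈ Set.Icc (0:ℝ) 1 :=
    fun t => ⟨le_min zero_le_one (le_max_left 0 t), min_le_left _ _⟩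
  have hclid : ∀ t ∈ Set.Icc (0:ℝ) 1, cl t = t := by
    intro t ht
    show min 1 (max 0 t) = t
    rw [max_eq_right ht.1, min_eq_right ht.2]
  have hclmono : Monotone cl := fun s t h => min_le_min le_rfl (max_le_max le_rfl h)
  have hcl0 : cl 0 = 0 := hclid 0 ⟨le_rfl, zero_le_one⟩
  have hcl1 : cl 1 = 1 := hclid 1 ⟨zero_le_one, le_rfl⟩
  -- normalized angle functions
  set ψ : ℕ → ℝ → ℝ :=
    fun k t => θ k (cl t) - (⌊θ k 0 / (2 * Real.pi)⌋ : ℤ) * (2 * Real.pi) with hψdef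
  have hψmono : ∀ k, Monotone (ψ k) := by
    intro k s t h
    exact sub_le_sub_right (hmono k (hclmem s) (hclmem t) (hclmono h)) _
  have hψmeas : ∀ k, Measurable (ψ k) := fun k => (hψmono k).measurable
  have hdir_eq : ∀ k, ∀ s ∈ Set.Icc (0:ℝ) 1, dirVec (ψ k) s = dirVec (θ k) s := by
    intro k s hs
    have h1 : ψ k s = θ k s - (⌊θ k 0 / (2 * Real.pi)⌋ : ℤ) * (2 * Real.pi) := by
      show θ k (cl s) - _ = _
      rw [hclid s hs]
    show (EuclideanSpace.equiv (Fin 2) ℝ).symm _ = (EuclideanSpace.equiv (Fin 2) ℝ).symm _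
    rw [h1, Real.cos_sub_int_mul_two_pi, Real.sin_sub_int_mul_two_pi]
  have hψ0eq : ∀ k, ψ k 0 = θ k 0 - (⌊θ k 0 / (2 * Real.pi)⌋ : ℤ) * (2 * Real.pi) := by
    intro k; show θ k (cl 0) - _ = _; rw [hcl0]
  have hψ1eq : ∀ k, ψ k 1 = θ k 1 - (⌊θ k 0 / (2 * Real.pi)⌋ : ℤ) * (2 * Real.pi) := by
    intro k; show θ k (cl 1) - _ = _; rw [hcl1]
  have hψ0mem : ∀ k, ψ k 0 ∈ Set.Ico (0:ℝ) (2 * Real.pi) := by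
    intro k
    rw [hψ0eq k]
    exact ⟨Int.sub_floor_div_mul_nonneg (θ k 0) (by linarith),
      Int.sub_floor_div_mul_lt (θ k 0) (by linarith)⟩
  have hψvar : ∀ k, ψ k 1 - ψ k 0 ≤ 2 * Real.pi := by
    intro k
    rw [hψ0eq k, hψ1eq k]
    have := hθ k
    linarith
  have hψbd : ∀ k t, ψ k t ∈ Set.Icc (0:ℝ) (4 * Real.pi) := by
    intro k t
    have l1 : ψ k 0 ≤ ψ k t := by
      show θ k (cl 0) - _ ≤ θ k (cl t) - _
      exact sub_le_sub_right (hmono k (hclmem 0) (hclmem t) (by rw [hcl0]; exact (hclmem t).1)) _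
    have l2 : ψ k t ≤ ψ k 1 := by
      show θ k (cl t) - _ ≤ θ k (cl 1) - _
      exact sub_le_sub_right (hmono k (hclmem t) (hclmem 1) (by rw [hcl1]; exact (hclmem t).2)) _
    have h0 := hψ0mem k
    have hv := hψvar k
    exact ⟨le_trans h0.1 l1, by linarith [h0.2.le]⟩
  -- σ in terms of ψ
  have hσψ : ∀ k, ∀ t ∈ Set.Icc (0:ℝ) 1,
      σ k t = q + ℓ k • ∫ s in (0:ℝ)..t, dirVec (ψ k) s := by
    intro k t ht
    rw [hσ k t]
    congr 2
    apply intervalIntegral.integral_congr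
    intro s hs
    rw [Set.uIcc_of_le ht.1] at hs
    exact (hdir_eq k s ⟨hs.1, hs.2.trans ht.2⟩).symm
  -- displacement bound
  have hdisp : ∀ k, ∀ a ∈ Set.Icc (0:ℝ) 1, ∀ b ∈ Set.Icc (0:ℝ) 1,
      ‖ℓ k • ∫ s in a..b, dirVec (ψ k) s‖ ≤ 2 * R := by
    intro k a ha b hb
    have key : σ k b - σ k a = ℓ k • ∫ s in a..b, dirVec (ψ k) s := by
      rw [hσψ k a ha, hσψ k b hb]
      have hadd := intervalIntegral.integral_add_adjacent_intervals
        (intInt_dirVec (ψ k) (hψmeas k) 0 a) (intInt_dirVec (ψ k) (hψmeas k) a b)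
      rw [← hadd, smul_add]
      abel
    rw [← key]
    exact hnorm2R _ (hrange k b hb) _ (hrange k a ha)
  -- upper and lower bounds on ℓ
  have hub : ∀ k, ℓ k ≤ 28 * R := fun k =>
    length_bound (ψ k) (hψmono k) (hψmeas k) (hψvar k) (ℓ k) R (hℓpos k).le (hdisp k)
  have hlb : ∀ k, ‖p - q‖ ≤ ℓ k := by
    intro k
    have h1 : p - q = ℓ k • ∫ s in (0:ℝ)..1, dirVec (θ k) s := by
      have h := hσ k 1
      rw [hend k] at h
      rw [h]; abel
    have h2 : ‖∫ s in (0:ℝ)..1, dirVec (θ k) s‖ ≤ 1 := by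
      have := intervalIntegral.norm_integral_le_of_norm_le_const
        (C := 1) (f := dirVec (θ k)) (a := 0) (b := 1)
        (fun x _ => le_of_eq (norm_dirVec _ x))
      simpa using this
    rw [h1, norm_smul, Real.norm_eq_abs, abs_of_pos (hℓpos k)]
    nlinarith [(hℓpos k).le]
  have hpqpos : (0:ℝ) < ‖p - q‖ := norm_pos_iff.2 (sub_ne_zero_of_ne hpq)
  -- Helly selection
  obtain ⟨φ, hφ, g, θ'', hg, hθ''mono, hθ''mem, hle, hge, hae, ⟨ℓ', hℓ'mem, hℓ'conv⟩⟩ :=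
    helly_selection ψ hψmono (4 * Real.pi) hψbd ℓ (‖p - q‖) (28 * R)
      (fun k => ⟨hlb k, hub k⟩)
  have hℓ'pos : 0 < ℓ' := lt_of_lt_of_le hpqpos hℓ'mem.1
  have hℓ'ub : ℓ' ≤ 28 * R := hℓ'mem.2
  have hθ''meas : Measurable θ'' := hθ''mono.measurable
  -- total variation bound of the limit
  have hvar' : θ'' 1 - θ'' 0 ≤ 2 * Real.pi := by
    have e2 : ∀ k, ψ k (((2:ℚ):ℝ)) = ψ k 1 := by
      intro k
      show θ k (cl ((2:ℚ):ℝ)) - _ = θ k (cl 1) - _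
      have : cl ((2:ℚ):ℝ) = cl 1 := by
        rw [hcl1]; show min 1 (max 0 ((2:ℚ):ℝ)) = 1; norm_num
      rw [this]
    have em1 : ∀ k, ψ k (((-1:ℚ):ℝ)) = ψ k 0 := by
      intro k
      show θ k (cl ((-1:ℚ):ℝ)) - _ = θ k (cl 0) - _
      have : cl ((-1:ℚ):ℝ) = cl 0 := by
        rw [hcl0]; show min 1 (max 0 ((-1:ℚ):ℝ)) = 0; norm_num
      rw [this]
    have h2' : Tendsto (fun k => ψ (φ k) 1) atTop (𝓝 (g 2)) := by
      have := hg 2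
      simpa only [e2] using this
    have hm1 : Tendsto (fun k => ψ (φ k) 0) atTop (𝓝 (g (-1))) := by
      have := hg (-1)
      simpa only [em1] using this
    have hdiffle : g 2 - g (-1) ≤ 2 * Real.pi :=
      le_of_tendsto (h2'.sub hm1) (Eventually.of_forall (fun k => hψvar (φ k)))
    have hA : θ'' 1 ≤ g 2 := hle 2 1 (by norm_num)
    have hB : g (-1) ≤ θ'' 0 := hge (-1) 0 (by norm_num)
    linarith
  -- the limit curve
  set σ' : ℝ → EuclideanSpace ℝ (Fin 2) :=
    fun t => q + ℓ' • ∫ s in (0:ℝ)..t, dirVec θ'' s with hσ'def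
  -- dominated convergence setup
  haveI hfin : IsFiniteMeasure (MeasureTheory.volume.restrict (Set.Ioc (0:ℝ) 1)) :=
    ⟨by rw [Measure.restrict_apply_univ]; exact measure_Ioc_lt_top⟩
  have haeIoc : ∀ᵐ t ∂(MeasureTheory.volume.restrict (Set.Ioc (0:ℝ) 1)),
      Tendsto (fun k => ψ (φ k) t) atTop (𝓝 (θ'' t)) := ae_restrict_of_ae hae
  have hdirptw : ∀ᵐ t ∂(MeasureTheory.volume.restrict (Set.Ioc (0:ℝ) 1)),
      Tendsto (fun k => dirVec (ψ (φ k)) t) atTop (𝓝 (dirVec θ'' t)) := by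
    filter_upwards [haeIoc] with t ht
    exact (cont_dir.tendsto (θ'' t)).comp ht
  -- L¹ convergence of the unit directions
  have heconv : Tendsto
      (fun k => ∫ t in Set.Ioc (0:ℝ) 1, ‖dirVec (ψ (φ k)) t - dirVec θ'' t‖) atTop (𝓝 0) := by
    have := MeasureTheory.tendsto_integral_of_dominated_convergence
      (μ := MeasureTheory.volume.restrict (Set.Ioc (0:ℝ) 1))
      (F := fun k t => ‖dirVec (ψ (φ k)) t - dirVec θ'' t‖)
      (f := fun _ => (0:ℝ)) (bound := fun _ => 2)
      (fun k => (((meas_dirVec _ (hψmeas (φ k))).sub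
        (meas_dirVec _ hθ''meas)).norm).aestronglyMeasurable)
      (integrable_const _)
      (fun k => Eventually.of_forall (fun t => by
        rw [norm_norm]
        calc ‖dirVec (ψ (φ k)) t - dirVec θ'' t‖
            ≤ ‖dirVec (ψ (φ k)) t‖ + ‖dirVec θ'' t‖ := norm_sub_le _ _
          _ = 2 := by rw [norm_dirVec, norm_dirVec]; norm_num))
      (by
        filter_upwards [hdirptw] with t ht
        have := (ht.sub (tendsto_const_nhds (x := dirVec θ'' t))).norm
        simpa using this)
    simpa using this
  -- L¹ convergence of the derivatives
  have hDconv : Tendsto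
      (fun k => ∫ t in Set.Ioc (0:ℝ) 1,
        ‖ℓ (φ k) • dirVec (ψ (φ k)) t - ℓ' • dirVec θ'' t‖) atTop (𝓝 0) := by
    have := MeasureTheory.tendsto_integral_of_dominated_convergence
      (μ := MeasureTheory.volume.restrict (Set.Ioc (0:ℝ) 1))
      (F := fun k t => ‖ℓ (φ k) • dirVec (ψ (φ k)) t - ℓ' • dirVec θ'' t‖)
      (f := fun _ => (0:ℝ)) (bound := fun _ => 28 * R + ℓ')
      (fun k => ((((meas_dirVec _ (hψmeas (φ k))).const_smul (ℓ (φ k))).sub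
        ((meas_dirVec _ hθ''meas).const_smul ℓ')).norm).aestronglyMeasurable)
      (integrable_const _)
      (fun k => Eventually.of_forall (fun t => by
        rw [norm_norm]
        calc ‖ℓ (φ k) • dirVec (ψ (φ k)) t - ℓ' • dirVec θ'' t‖
            ≤ ‖ℓ (φ k) • dirVec (ψ (φ k)) t‖ + ‖ℓ' • dirVec θ'' t‖ := norm_sub_le _ _
          _ = ℓ (φ k) + ℓ' := by
              rw [norm_smul, norm_smul, norm_dirVec, norm_dirVec, Real.norm_eq_abs,
                Real.norm_eq_abs, abs_of_pos (hℓpos (φ k)), abs_of_pos hℓ'pos, mul_one, mul_one]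
          _ ≤ 28 * R + ℓ' := by linarith [hub (φ k)]))
      (by
        filter_upwards [hdirptw] with t ht
        have h2 : Tendsto (fun k => ℓ (φ k) • dirVec (ψ (φ k)) t) atTop
            (𝓝 (ℓ' • dirVec θ'' t)) := hℓ'conv.smul ht
        have := (h2.sub (tendsto_const_nhds (x := ℓ' • dirVec θ'' t))).norm
        simpa using this)
    simpa using this
  -- the controlling sequence
  set e : ℕ → ℝ := fun k => ∫ t in Set.Ioc (0:ℝ) 1, ‖dirVec (ψ (φ k)) t - dirVec θ'' t‖
    with hedef
  set c : ℕ → ℝ := fun k => |ℓ (φ k) - ℓ'| + ℓ' * e k with hcdef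
  have hcconv : Tendsto c atTop (𝓝 0) := by
    have h1 : Tendsto (fun k => |ℓ (φ k) - ℓ'|) atTop (𝓝 0) := by
      have := (hℓ'conv.sub (tendsto_const_nhds (x := ℓ'))).abs
      simpa using this
    have h2 : Tendsto (fun k => ℓ' * e k) atTop (𝓝 0) := by
      have := heconv.const_mul ℓ'
      simpa using this
    have := h1.add h2
    simpa using this
  -- integrability of direction-difference norms
  have hediffint : ∀ k, IntegrableOn (fun s => ‖dirVec (ψ (φ k)) s - dirVec θ'' s‖)
      (Set.Ioc (0:ℝ) 1) MeasureTheory.volume := by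
    intro k
    apply Integrable.mono' (integrable_const (2:ℝ))
    · exact (((meas_dirVec _ (hψmeas (φ k))).sub
        (meas_dirVec _ hθ''meas)).norm).aestronglyMeasurable
    · refine Eventually.of_forall (fun s => ?_)
      rw [norm_norm]
      calc ‖dirVec (ψ (φ k)) s - dirVec θ'' s‖
          ≤ ‖dirVec (ψ (φ k)) s‖ + ‖dirVec θ'' s‖ := norm_sub_le _ _
        _ = 2 := by rw [norm_dirVec, norm_dirVec]; norm_num
  -- key uniform estimate
  have hkey : ∀ k, ∀ t ∈ Set.Icc (0:ℝ) 1, ‖σ (φ k) t - σ' t‖ ≤ c k := by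
    intro k t ht
    have hint1 := intInt_dirVec (ψ (φ k)) (hψmeas (φ k)) 0 t
    have hint2 := intInt_dirVec θ'' hθ''meas 0 t
    have expand : σ (φ k) t - σ' t
        = (ℓ (φ k) - ℓ') • (∫ s in (0:ℝ)..t, dirVec (ψ (φ k)) s)
          + ℓ' • (∫ s in (0:ℝ)..t, (dirVec (ψ (φ k)) s - dirVec θ'' s)) := by
      rw [hσψ (φ k) t ht]
      show _ - (q + ℓ' • ∫ s in (0:ℝ)..t, dirVec θ'' s) = _
      rw [intervalIntegral.integral_sub hint1 hint2, sub_smul, smul_sub]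
      abel
    have n1 : ‖∫ s in (0:ℝ)..t, dirVec (ψ (φ k)) s‖ ≤ 1 := by
      have := intervalIntegral.norm_integral_le_of_norm_le_const
        (C := 1) (f := dirVec (ψ (φ k))) (a := 0) (b := t)
        (fun x _ => le_of_eq (norm_dirVec _ x))
      rw [sub_zero] at this
      calc ‖∫ s in (0:ℝ)..t, dirVec (ψ (φ k)) s‖ ≤ 1 * |t| := this
        _ ≤ 1 := by rw [one_mul, abs_of_nonneg ht.1]; exact ht.2
    have n2 : ‖∫ s in (0:ℝ)..t, (dirVec (ψ (φ k)) s - dirVec θ'' s)‖ ≤ e k := by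
      calc ‖∫ s in (0:ℝ)..t, (dirVec (ψ (φ k)) s - dirVec θ'' s)‖
          ≤ ∫ s in (0:ℝ)..t, ‖dirVec (ψ (φ k)) s - dirVec θ'' s‖ :=
            intervalIntegral.norm_integral_le_integral_norm ht.1
        _ = ∫ s in Set.Ioc (0:ℝ) t, ‖dirVec (ψ (φ k)) s - dirVec θ'' s‖ :=
            intervalIntegral.integral_of_le ht.1
        _ ≤ e k := by
            apply MeasureTheory.setIntegral_mono_set (hediffint k)
              (Eventually.of_forall (fun s => norm_nonneg _))
            exact HasSubset.Subset.eventuallyLE (Set.Ioc_subset_Ioc le_rfl ht.2)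
    calc ‖σ (φ k) t - σ' t‖
        = ‖(ℓ (φ k) - ℓ') • (∫ s in (0:ℝ)..t, dirVec (ψ (φ k)) s)
          + ℓ' • (∫ s in (0:ℝ)..t, (dirVec (ψ (φ k)) s - dirVec θ'' s))‖ := by rw [expand]
      _ ≤ ‖(ℓ (φ k) - ℓ') • (∫ s in (0:ℝ)..t, dirVec (ψ (φ k)) s)‖
          + ‖ℓ' • (∫ s in (0:ℝ)..t, (dirVec (ψ (φ k)) s - dirVec θ'' s))‖ := norm_add_le _ _
      _ ≤ |ℓ (φ k) - ℓ'| * 1 + ℓ' * e k := by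
          rw [norm_smul, norm_smul, Real.norm_eq_abs, Real.norm_eq_abs, abs_of_pos hℓ'pos]
          have := mul_le_mul_of_nonneg_left n1 (abs_nonneg (ℓ (φ k) - ℓ'))
          have := mul_le_mul_of_nonneg_left n2 hℓ'pos.le
          gcongr
      _ = c k := by rw [mul_one]
  -- pointwise convergence of the curves
  have hptw : ∀ t ∈ Set.Icc (0:ℝ) 1,
      Tendsto (fun k => σ (φ k) t) atTop (𝓝 (σ' t)) := by
    intro t ht
    rw [tendsto_iff_norm_sub_tendsto_zero]
    exact squeeze_zero (fun k => norm_nonneg _) (fun k => hkey k t ht) hcconv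
  -- endpoint
  have hend' : σ' 1 = p := by
    have h := hptw 1 ⟨zero_le_one, le_rfl⟩
    simp only [hend] at h
    exact tendsto_nhds_unique h tendsto_const_nhds
  -- range
  have hrange' : ∀ t ∈ Set.Icc (0:ℝ) 1, σ' t ∈ closure Ω := by
    intro t ht
    exact isClosed_closure.mem_of_tendsto (hptw t ht)
      (Eventually.of_forall (fun k => hrange (φ k) t ht))
  -- L¹ convergence of curves
  have hL1 : Tendsto (fun k => ∫ t in (0:ℝ)..1, ‖σ (φ k) t - σ' t‖) atTop (𝓝 0) := by
    apply squeeze_zero_norm _ hcconv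
    intro k
    have := intervalIntegral.norm_integral_le_of_norm_le_const
      (C := c k) (f := fun t => ‖σ (φ k) t - σ' t‖) (a := 0) (b := 1)
      (fun x hx => by
        rw [norm_norm]
        rw [Set.uIoc_of_le zero_le_one] at hx
        exact hkey k x ⟨hx.1.le, hx.2⟩)
    simpa using this
  -- W¹¹ convergence
  have hW11 : Tendsto (fun k => ∫ t in (0:ℝ)..1,
      ‖ℓ (φ k) • dirVec (θ (φ k)) t - ℓ' • dirVec θ'' t‖) atTop (𝓝 0) := by
    have heq : ∀ k, (∫ t in (0:ℝ)..1, ‖ℓ (φ k) • dirVec (θ (φ k)) t - ℓ' • dirVec θ'' t‖)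
        = ∫ t in Set.Ioc (0:ℝ) 1, ‖ℓ (φ k) • dirVec (ψ (φ k)) t - ℓ' • dirVec θ'' t‖ := by
      intro k
      rw [intervalIntegral.integral_of_le zero_le_one]
      apply MeasureTheory.setIntegral_congr_fun measurableSet_Ioc
      intro t htmem
      have hde := hdir_eq (φ k) t ⟨htmem.1.le, htmem.2⟩
      simp only [← hde]
    simp only [heq]
    exact hDconv
  -- uniform convergence
  have hunif : TendstoUniformlyOn (fun k => σ (φ k)) σ' atTop (Set.Icc 0 1) := by
    rw [Metric.tendstoUniformlyOn_iff]
    intro ε hε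
    filter_upwards [hcconv.eventually_lt_const hε] with k hk t ht
    calc dist (σ' t) (σ (φ k) t) = ‖σ (φ k) t - σ' t‖ := by
          rw [dist_eq_norm, norm_sub_rev]
      _ ≤ c k := hkey k t ht
      _ < ε := hk
  exact ⟨φ, hφ, ℓ', θ'', σ', fun t => rfl, hθ''mono.monotoneOn _, hvar', hℓ'pos, hend',
    hrange', hL1, hW11, hunif⟩
end
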